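/- Let b₁ be the element (l, 0, …, 0) of the U_q'(B^{(1)}_n) (or D^{(1)}_n) crystal B_l and b₂ = (x₁, x₂, 0, …, 0, x̄₁) ∈ B_k with k = x₁ + x₂ + x̄₁ and l ≥ k. With the normalization H((l,0,…,0) ⊗ (k,0,…,0)) = 2k, the quantities produced by the insertion rule satisfy: z = x̄₁, l' = l − x̄₁, k' = k − x̄₁, the second row of the product tableau has length m = x₂, and hence 2·min(l', k') − m = 2(k − x̄₁) − x₂. -/
import Mathlib


/-- A column with at most two boxes: `one β`, or `two α β` with `α` above `β`.
A tableau with at most two rows is a list of such columns, read left to right. -/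
inductive BCol : Type
  | one (β : ℕ)
  | two (α β : ℕ)

/-- The type `B` alphabet `1 < ⋯ < n < ∘ < n̄ < ⋯ < 1̄` is encoded as
`{1, …, 2n+1}` with `∘ = n+1` and `x̄ = 2n+2−x` for `1 ≤ x ≤ n`. -/
def barB (n x : ℕ) : ℕ := 2 * n + 2 - x

/-- The top (first-row) letter of a column. -/
def BCol.top : BCol → ℕ
  | .one β => β
  | .two α _ => α

/-- Validity of a single column of a semistandard `B` tableau: letters lie in
the alphabet, a two-box column `(α above β)` satisfies `α < β` or
`(α,β) = (∘,∘)`, and no column equals `(1 above 1̄)`. -/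
def BColOK (n : ℕ) : BCol → Prop
  | .one β => 1 ≤ β ∧ β ≤ 2 * n + 1
  | .two α β => 1 ≤ α ∧ β ≤ 2 * n + 1 ∧ (α < β ∨ (α = n + 1 ∧ β = n + 1)) ∧
      ¬(α = 1 ∧ β = 2 * n + 1)

/-- Conditions on two adjacent columns of a semistandard `B` tableau: the shape
has two-box columns to the left of one-box columns, both rows are weakly
increasing, the `(x,x)`-configurations (for `1 ≤ x < n`) are absent, and the
`(n,n)`-configurations (lower-left and upper-right entries equal to
`(n,n̄)`, `(n,∘)`, `(∘,∘)` or `(∘,n̄)`) are absent. -/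
def BAdjOK (n : ℕ) : BCol → BCol → Prop
  | .one α, .one α' => α ≤ α'
  | .one _, .two _ _ => False
  | .two α β, .one α' => α ≤ α' ∧
      ¬((β = n ∨ β = n + 1) ∧ (α' = n + 1 ∨ α' = n + 2))
  | .two α β, .two α' β' => α ≤ α' ∧ β ≤ β' ∧
      ¬((β = n ∨ β = n + 1) ∧ (α' = n + 1 ∨ α' = n + 2)) ∧
      ¬(∃ x, 1 ≤ x ∧ x < n ∧
        ((α = x ∧ α' = x ∧ β' = barB n x) ∨ (α = x ∧ β = barB n x ∧ β' = barB n x)))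

/-- A semistandard `B` tableau with at most two rows, as a list of columns. -/
def SemistdB (n : ℕ) (cols : List BCol) : Prop :=
  (∀ c ∈ cols, BColOK n c) ∧ List.Chain' (BAdjOK n) cols

/-- `RunB n a cols cols' route`: the type `B` column insertion of the letter `a`
into the tableau `cols` (elementary rules A0, A1, B0–B7) yields the tableau
`cols'`; `route` records, column by column along the bumping route, whether the
newly set letter lies in the first row (`true`) or in the second row (`false`). -/
inductive RunB (n : ℕ) : ℕ → List BCol → List BCol → List Bool → Prop
  | a0 (a : ℕ) :
      RunB n a [] [BCol.one a] [true]
  | a1 (a β : ℕ) (rest : List BCol)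
      (h : β < a ∨ (β = n + 1 ∧ a = n + 1)) :
      RunB n a (BCol.one β :: rest) (BCol.two β a :: rest) [false]
  | b0 (a β : ℕ) (rest rest' : List BCol) (route : List Bool)
      (h : a ≤ β) (hne : ¬(a = n + 1 ∧ β = n + 1))
      (hr : RunB n β rest rest' route) :
      RunB n a (BCol.one β :: rest) (BCol.one a :: rest') (true :: route)
  | b1 (a α γ : ℕ) (rest rest' : List BCol) (route : List Bool)
      (h1 : α < a) (h2 : a ≤ γ) (h3 : ¬(α ≤ n ∧ γ = barB n α))
      (h4 : ¬(a = n + 1 ∧ γ = n + 1))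
      (hr : RunB n γ rest rest' route) :
      RunB n a (BCol.two α γ :: rest) (BCol.two α a :: rest') (false :: route)
  | b2 (a β γ : ℕ) (rest rest' : List BCol) (route : List Bool)
      (h1 : a ≤ β) (h2 : β < γ) (h3 : ¬(a ≤ n ∧ γ = barB n a))
      (h4 : ¬(a = n + 1 ∧ β = n + 1))
      (hr : RunB n β rest rest' route) :
      RunB n a (BCol.two β γ :: rest) (BCol.two a γ :: rest') (true :: route)
  | b3 (x : ℕ) (rest rest' : List BCol) (route : List Bool)
      (hx1 : 1 ≤ x) (hx2 : x ≤ n)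
      (hr : RunB n (barB n x) rest rest' route) :
      RunB n (n + 1) (BCol.two (n + 1) (barB n x) :: rest)
        (BCol.two (n + 1) (n + 1) :: rest') (false :: route)
  | b4 (x : ℕ) (rest rest' : List BCol) (route : List Bool)
      (hx1 : 1 ≤ x) (hx2 : x ≤ n)
      (hr : RunB n (n + 1) rest rest' route) :
      RunB n x (BCol.two (n + 1) (n + 1) :: rest)
        (BCol.two x (n + 1) :: rest') (true :: route)
  | b5 (x β : ℕ) (rest rest' : List BCol) (route : List Bool)
      (hx1 : 2 ≤ x) (hx2 : x ≤ n) (h1 : x ≤ β) (h2 : β ≤ barB n x)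
      (hr : RunB n (barB n (x - 1)) rest rest' route) :
      RunB n β (BCol.two x (barB n x) :: rest)
        (BCol.two (x - 1) β :: rest') (false :: route)
  | b6 (x β : ℕ) (rest rest' : List BCol) (route : List Bool)
      (hx1 : 1 ≤ x) (hx2 : x < n) (h1 : x < β) (h2 : β < barB n x)
      (hr : RunB n β rest rest' route) :
      RunB n x (BCol.two β (barB n x) :: rest)
        (BCol.two (x + 1) (barB n (x + 1)) :: rest') (true :: route)
  | b7 (rest rest' : List BCol) (route : List Bool)
      (hr : RunB n (n + 2) rest rest' route) :
      RunB n n (BCol.two (n + 1) (n + 2) :: rest)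
        (BCol.two n (n + 1) :: rest') (true :: route)


/-- `InsertsB n w T T'`: successively column-inserting the letters of the list
`w` (in order) into the tableau `T` yields the tableau `T'`. -/
inductive InsertsB (n : ℕ) : List ℕ → List BCol → List BCol → Prop
  | nil (T : List BCol) : InsertsB n [] T T
  | cons (a : ℕ) (ws : List ℕ) (T T' T'' : List BCol) (route : List Bool)
      (h : RunB n a T T' route) (hs : InsertsB n ws T' T'') :
      InsertsB n (a :: ws) T T''

/-- The number of two-box columns, i.e. the length of the second row. -/
def countTwo (cols : List BCol) : ℕ :=
  cols.countP fun c => match c with | BCol.two _ _ => true | BCol.one _ => false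

/-- For the highest weight elements `b₁ = (l,0,…,0) ∈ B_l` and
`b₂ = (x₁,x₂,0,…,0,x̄₁) ∈ B_k` with `k = x₁+x₂+x̄₁ ≤ l`, the quantities of the
insertion rule satisfy: `z = min(#1's in T(b₁), #1̄'s in T(b₂)) = x̄₁`,
inserting `2^{x₂}` then `1^{x₁}` into `T_* = 1^{l−x̄₁}` produces a tableau whose
second row has length `m = x₂`, and `2·min(l',k') − m = 2(k−x̄₁) − x₂`
where `l' = l−x̄₁`, `k' = k−x̄₁`. -/
lemma run2_aux (n : ℕ) (hn : 2 ≤ n) : ∀ j m, 1 ≤ m → ∃ route,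
    RunB n 2 (List.replicate j (BCol.two 1 2) ++ List.replicate m (BCol.one 1))
      (List.replicate (j + 1) (BCol.two 1 2) ++ List.replicate (m - 1) (BCol.one 1)) route := by
  intro j
  induction j with
  | zero =>
    intro m hm
    obtain ⟨m', rfl⟩ : ∃ m', m = m' + 1 := ⟨m - 1, by omega⟩
    refine ⟨[false], ?_⟩
    simpa [List.replicate_succ] using
      RunB.a1 (n := n) 2 1 (List.replicate m' (BCol.one 1)) (Or.inl (by omega))
  | succ j ih =>
    intro m hm
    obtain ⟨route, hr⟩ := ih m hm
    refine ⟨false :: route, ?_⟩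
    have h := RunB.b1 (n := n) 2 1 2 _ _ route (by omega) (by omega)
      (by simp only [barB]; omega) (by omega) hr
    simpa [List.replicate_succ] using h

lemma run1_aux (n : ℕ) (hn : 2 ≤ n) : ∀ j m, ∃ route,
    RunB n 1 (List.replicate j (BCol.two 1 2) ++ List.replicate m (BCol.one 1))
      (List.replicate j (BCol.two 1 2) ++ List.replicate (m + 1) (BCol.one 1)) route := by
  intro j
  induction j with
  | zero =>
    intro m
    induction m with
    | zero => exact ⟨[true], by simpa using RunB.a0 (n := n) 1⟩
    | succ m ihm =>
      obtain ⟨route, hr⟩ := ihm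
      refine ⟨true :: route, ?_⟩
      have h := RunB.b0 (n := n) 1 1 _ _ route le_rfl (by omega) (by simpa using hr)
      simpa [List.replicate_succ] using h
  | succ j ih =>
    intro m
    obtain ⟨route, hr⟩ := ih m
    refine ⟨true :: route, ?_⟩
    have h := RunB.b2 (n := n) 1 1 2 _ _ route le_rfl (by omega)
      (by simp only [barB]; omega) (by omega) hr
    simpa [List.replicate_succ] using h

lemma inserts2_aux (n : ℕ) (hn : 2 ≤ n) : ∀ x j m, x ≤ m →
    InsertsB n (List.replicate x 2)
      (List.replicate j (BCol.two 1 2) ++ List.replicate m (BCol.one 1))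
      (List.replicate (j + x) (BCol.two 1 2) ++ List.replicate (m - x) (BCol.one 1)) := by
  intro x
  induction x with
  | zero => intro j m _; simpa using InsertsB.nil _
  | succ x ih =>
    intro j m hm
    obtain ⟨route, hr⟩ := run2_aux n hn j m (by omega)
    have hs := ih (j + 1) (m - 1) (by omega)
    have heq : m - 1 - x = m - (x + 1) := by omega
    have heq2 : j + 1 + x = j + (x + 1) := by omega
    rw [heq, heq2] at hs
    exact InsertsB.cons _ _ _ _ _ route hr (by simpa [List.replicate_succ] using hs)

lemma inserts1_aux (n : ℕ) (hn : 2 ≤ n) : ∀ x j m,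
    InsertsB n (List.replicate x 1)
      (List.replicate j (BCol.two 1 2) ++ List.replicate m (BCol.one 1))
      (List.replicate j (BCol.two 1 2) ++ List.replicate (m + x) (BCol.one 1)) := by
  intro x
  induction x with
  | zero => intro j m; simpa using InsertsB.nil _
  | succ x ih =>
    intro j m
    obtain ⟨route, hr⟩ := run1_aux n hn j m
    have hs := ih j (m + 1)
    have heq : m + 1 + x = m + (x + 1) := by omega
    rw [heq] at hs
    exact InsertsB.cons _ _ _ _ _ route hr (by simpa [List.replicate_succ] using hs)

lemma inserts_append (n : ℕ) {w₁ w₂ : List ℕ} {T T' T'' : List BCol}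
    (h₁ : InsertsB n w₁ T T') (h₂ : InsertsB n w₂ T' T'') :
    InsertsB n (w₁ ++ w₂) T T'' := by
  induction h₁ with
  | nil _ => simpa using h₂
  | cons a ws T T' T''' route h hs ih =>
    exact InsertsB.cons _ _ _ _ _ route h (ih h₂)

theorem stmt_14 (n l k x₁ x₂ xb₁ : ℕ) (hn : 2 ≤ n)
    (hk : k = x₁ + x₂ + xb₁) (hlk : k ≤ l) :
    min l xb₁ = xb₁ ∧
    (∃ T' : List BCol,
      InsertsB n (List.replicate x₂ 2 ++ List.replicate x₁ 1)
        (List.replicate (l - xb₁) (BCol.one 1)) T' ∧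
      countTwo T' = x₂) ∧
    2 * min (l - xb₁) (k - xb₁) - x₂ = 2 * (k - xb₁) - x₂ := by
  refine ⟨by omega, ?_, by rw [min_eq_right (by omega)]⟩
  refine ⟨List.replicate x₂ (BCol.two 1 2) ++
    List.replicate (l - xb₁ - x₂ + x₁) (BCol.one 1), ?_, ?_⟩
  · have h2 := inserts2_aux n hn x₂ 0 (l - xb₁) (by omega)
    have h1 := inserts1_aux n hn x₁ x₂ (l - xb₁ - x₂)
    simp only [zero_add, List.replicate_zero, List.nil_append] at h2
    exact inserts_append n h2 h1
  · simp [countTwo, List.countP_append, List.countP_replicate]
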